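/- arXiv:2207.02385 — 3 statements merged into one kernel-verified Lean document; each statement's English description precedes it below -/
import Mathlib

section
/- (Nonlinear Gronwall inequality) Let t₀ ≥ 0, let a, b, Y : [t₀, ∞) → [0, ∞) be continuous, let c ≥ 0 and 0 ≤ α < 1. Assume that Y(t) ≤ c + ∫_{t₀}^{t} ( a(s)·Y(s) + b(s)·Y(s)^α ) ds for all t ≥ t₀. Then for all t ≥ t₀: Y(t) ≤ [ c^{1−α} · exp( (1−α) ∫_{t₀}^{t} a(r) dr ) + (1−α) ∫_{t₀}^{t} b(s) · exp( (1−α) ∫_{s}^{t} a(r) dr ) ds ]^{1/(1−α)}. -/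
open MeasureTheory intervalIntegral

/-- Nonlinear Gronwall inequality: if `Y(t) ≤ c + ∫_{t₀}^t (a(s) Y(s) + b(s) Y(s)^α) ds`
for all `t ≥ t₀`, with `a, b, Y` continuous nonnegative, `c ≥ 0`, `0 ≤ α < 1`, then
`Y(t) ≤ [c^{1−α} exp((1−α)∫_{t₀}^t a) + (1−α)∫_{t₀}^t b(s) exp((1−α)∫_s^t a) ds]^{1/(1−α)}`. -/
theorem nonlinear_gronwall
    (t₀ : ℝ) (ht₀ : 0 ≤ t₀)
    (a b Y : ℝ → ℝ)
    (ha : ContinuousOn a (Set.Ici t₀)) (hb : ContinuousOn b (Set.Ici t₀))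
    (hY : ContinuousOn Y (Set.Ici t₀))
    (ha0 : ∀ t ∈ Set.Ici t₀, 0 ≤ a t) (hb0 : ∀ t ∈ Set.Ici t₀, 0 ≤ b t)
    (hY0 : ∀ t ∈ Set.Ici t₀, 0 ≤ Y t)
    (c α : ℝ) (hc : 0 ≤ c) (hα0 : 0 ≤ α) (hα1 : α < 1)
    (hYle : ∀ t, t₀ ≤ t →
      Y t ≤ c + ∫ s in t₀..t, (a s * Y s + b s * Y s ^ α)) :
    ∀ t, t₀ ≤ t →
      Y t ≤ (c ^ (1 - α) * Real.exp ((1 - α) * ∫ r in t₀..t, a r)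
        + (1 - α) * ∫ s in t₀..t, b s * Real.exp ((1 - α) * ∫ r in s..t, a r))
          ^ (1 / (1 - α)) := by
  intro T hT
  have hβ : (0:ℝ) < 1 - α := by linarith
  have hβne : (1 - α) ≠ 0 := ne_of_gt hβ
  set β : ℝ := 1 - α with hβdef
  -- notation for the two constants in the bound
  set E₁ : ℝ := Real.exp (β * ∫ r in t₀..T, a r) with hE₁def
  set I₂ : ℝ := ∫ s in t₀..T, b s * Real.exp (β * ∫ r in s..T, a r) with hI₂def
  suffices H : ∀ c' : ℝ, c < c' →
      Y T ≤ (c' ^ β * E₁ + β * I₂) ^ (1 / β) by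
    -- pass to the limit c' → c from the right
    have h1 : ContinuousAt (fun x : ℝ => x ^ β) c :=
      Real.continuousAt_rpow_const c β (Or.inr hβ.le)
    have h2 : ContinuousAt (fun x : ℝ => (x ^ β * E₁ + β * I₂) ^ (1 / β)) c := by
      have h3 : ContinuousAt (fun x : ℝ => x ^ β * E₁ + β * I₂) c :=
        (h1.mul continuousAt_const).add continuousAt_const
      exact h3.rpow_const (Or.inr (by positivity))
    have htend : Filter.Tendsto (fun x : ℝ => (x ^ β * E₁ + β * I₂) ^ (1 / β))
        (nhdsWithin c (Set.Ioi c)) (nhds ((c ^ β * E₁ + β * I₂) ^ (1 / β))) :=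
      (h2.tendsto).mono_left nhdsWithin_le_nhds
    refine ge_of_tendsto htend ?_
    filter_upwards [self_mem_nhdsWithin] with x hx
    exact H x hx
  intro c' hcc'
  have hc' : 0 < c' := lt_of_le_of_lt hc hcc'
  have hYle' : ∀ t, t₀ ≤ t →
      Y t ≤ c' + ∫ s in t₀..t, (a s * Y s + b s * Y s ^ α) := by
    intro t ht
    have := hYle t ht
    linarith
  -- basic continuity and nonnegativity facts
  have hYα : ContinuousOn (fun s => Y s ^ α) (Set.Ici t₀) :=
    hY.rpow_const (fun x _ => Or.inr hα0)
  have hf₁cont : ContinuousOn (fun s => a s * Y s + b s * Y s ^ α) (Set.Ici t₀) :=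
    (ha.mul hY).add (hb.mul hYα)
  have hf₁0 : ∀ s ∈ Set.Ici t₀, 0 ≤ a s * Y s + b s * Y s ^ α := fun s hs =>
    add_nonneg (mul_nonneg (ha0 s hs) (hY0 s hs))
      (mul_nonneg (hb0 s hs) (Real.rpow_nonneg (hY0 s hs) α))
  have hInt : ∀ f : ℝ → ℝ, ContinuousOn f (Set.Ici t₀) → ∀ s t, t₀ ≤ s → t₀ ≤ t →
      IntervalIntegrable f volume s t := by
    intro f hf s t hs ht
    exact (hf.mono (fun x hx => (le_min hs ht).trans hx.1)).intervalIntegrable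
  -- continuity of primitives on `Ici t₀`
  have hprim : ∀ f : ℝ → ℝ, ContinuousOn f (Set.Ici t₀) →
      ContinuousOn (fun u => ∫ s in t₀..u, f s) (Set.Ici t₀) := by
    intro f hf t ht
    have hIcc : ContinuousOn (fun u => ∫ s in t₀..u, f s) (Set.uIcc t₀ (t + 1)) := by
      apply intervalIntegral.continuousOn_primitive_interval
      have : Set.uIcc t₀ (t + 1) ⊆ Set.Ici t₀ := fun x hx =>
        (le_min le_rfl (by simp only [Set.mem_Ici] at ht; linarith)).trans hx.1
      exact (hf.mono this).integrableOn_compact isCompact_uIcc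
    have ht1 : t ∈ Set.uIcc t₀ (t + 1) := by
      rw [Set.uIcc_of_le (by simp only [Set.mem_Ici] at ht; linarith)]
      constructor
      · exact ht
      · linarith
    have hmem : Set.uIcc t₀ (t + 1) ∈ nhdsWithin t (Set.Ici t₀) := by
      rw [Set.uIcc_of_le (by simp only [Set.mem_Ici] at ht; linarith)]
      have : Set.Ici t₀ ∩ Set.Iic (t + 1) ∈ nhdsWithin t (Set.Ici t₀) :=
        Filter.inter_mem self_mem_nhdsWithin
          (mem_nhdsWithin_of_mem_nhds (Iic_mem_nhds (lt_add_one t)))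
      simpa [Set.Ici_inter_Iic] using this
    exact ((hIcc t ht1).mono_of_mem_nhdsWithin hmem)
  -- derivative of primitives at interior points
  have hder : ∀ f : ℝ → ℝ, ContinuousOn f (Set.Ici t₀) → ∀ x, t₀ < x →
      HasDerivAt (fun u => ∫ s in t₀..u, f s) (f x) x := by
    intro f hf x hx
    have hco : ContinuousOn f (Set.Ioi t₀) := hf.mono Set.Ioi_subset_Ici_self
    exact intervalIntegral.integral_hasDerivAt_right (hInt f hf t₀ x le_rfl hx.le)
      (hco.stronglyMeasurableAtFilter isOpen_Ioi x hx)
      (hco.continuousAt (isOpen_Ioi.mem_nhds hx))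
  -- main objects
  set f₁ : ℝ → ℝ := fun s => a s * Y s + b s * Y s ^ α with hf₁def
  set Z : ℝ → ℝ := fun t => c' + ∫ s in t₀..t, f₁ s with hZdef
  set A : ℝ → ℝ := fun t => ∫ r in t₀..t, a r with hAdef
  set E : ℝ → ℝ := fun t => Real.exp (-(β * A t)) with hEdef
  set f₂ : ℝ → ℝ := fun s => b s * E s with hf₂def
  set B : ℝ → ℝ := fun t => ∫ s in t₀..t, f₂ s with hBdef
  set g : ℝ → ℝ := fun t => Z t ^ β * E t - β * B t with hgdef
  have hYZ : ∀ t, t₀ ≤ t → Y t ≤ Z t := hYle'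
  have hZpos : ∀ t, t₀ ≤ t → 0 < Z t := by
    intro t ht
    have h0 : 0 ≤ ∫ s in t₀..t, f₁ s :=
      intervalIntegral.integral_nonneg ht (fun s hs => hf₁0 s hs.1)
    have : Z t = c' + ∫ s in t₀..t, f₁ s := rfl
    rw [this]; linarith
  have hAcont : ContinuousOn A (Set.Ici t₀) := hprim a ha
  have hEcont : ContinuousOn E (Set.Ici t₀) :=
    Real.continuous_exp.comp_continuousOn ((hAcont.const_smul β).neg)
  have hf₂cont : ContinuousOn f₂ (Set.Ici t₀) := hb.mul hEcont
  have hZcont : ContinuousOn Z (Set.Ici t₀) := continuousOn_const.add (hprim f₁ hf₁cont)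
  have hZder : ∀ x, t₀ < x → HasDerivAt Z (f₁ x) x := fun x hx =>
    (hder f₁ hf₁cont x hx).const_add c'
  have hAder : ∀ x, t₀ < x → HasDerivAt A (a x) x := hder a ha
  have hBder : ∀ x, t₀ < x → HasDerivAt B (f₂ x) x := hder f₂ hf₂cont
  have hEder : ∀ x, t₀ < x → HasDerivAt E (E x * (-(β * a x))) x := by
    intro x hx
    have h2 : HasDerivAt (fun t => -(β * A t)) (-(β * a x)) x :=
      ((hAder x hx).const_mul β).neg
    exact h2.exp
  -- derivative of g and its sign
  set gd : ℝ → ℝ := fun x =>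
    (f₁ x * β * Z x ^ (β - 1) * E x + Z x ^ β * (E x * (-(β * a x)))) - β * f₂ x with hgddef
  have hgd : ∀ x, t₀ < x → HasDerivAt g (gd x) x := by
    intro x hx
    have h1 : HasDerivAt (fun t => Z t ^ β) (f₁ x * β * Z x ^ (β - 1)) x :=
      (hZder x hx).rpow_const (Or.inl (hZpos x hx.le).ne')
    exact ((h1.mul (hEder x hx)).sub ((hBder x hx).const_mul β))
  have hgd0 : ∀ x, t₀ < x → gd x ≤ 0 := by
    intro x hx
    have hP : 0 < Z x := hZpos x hx.le
    have hYx : Y x ≤ Z x := hYZ x hx.le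
    have hYαx : Y x ^ α ≤ Z x ^ α := Real.rpow_le_rpow (hY0 x hx.le) hYx hα0
    have hf₁le : f₁ x * Z x ^ (β - 1) ≤ a x * Z x ^ β + b x := by
      have e1 : Z x ^ (β - 1) * Z x = Z x ^ β := by
        have h := Real.rpow_add hP (β - 1) 1
        rw [Real.rpow_one] at h
        rw [← h]
        norm_num
      have e2 : Z x ^ α * Z x ^ (β - 1) = 1 := by
        rw [← Real.rpow_add hP]
        have : α + (β - 1) = 0 := by rw [hβdef]; ring
        rw [this, Real.rpow_zero]
      have hstep : f₁ x ≤ a x * Z x + b x * Z x ^ α := by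
        have := mul_le_mul_of_nonneg_left hYx (ha0 x hx.le)
        have := mul_le_mul_of_nonneg_left hYαx (hb0 x hx.le)
        simp only [hf₁def]
        nlinarith [mul_le_mul_of_nonneg_left hYx (ha0 x hx.le),
          mul_le_mul_of_nonneg_left hYαx (hb0 x hx.le)]
      calc f₁ x * Z x ^ (β - 1) ≤ (a x * Z x + b x * Z x ^ α) * Z x ^ (β - 1) :=
            mul_le_mul_of_nonneg_right hstep (Real.rpow_nonneg hP.le _)
        _ = a x * (Z x ^ (β - 1) * Z x) + b x * (Z x ^ α * Z x ^ (β - 1)) := by ring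
        _ = a x * Z x ^ β + b x := by rw [e1, e2, mul_one]
    have hEx : 0 < E x := Real.exp_pos _
    have hrepr : gd x = E x * β * (f₁ x * Z x ^ (β - 1) - (a x * Z x ^ β + b x)) := by
      simp only [hgddef, hf₂def]; ring
    rw [hrepr]
    apply mul_nonpos_of_nonneg_of_nonpos
    · positivity
    · linarith
  rcases eq_or_lt_of_le hT with rfl | hTlt
  · -- trivial case T = t₀
    have hY0' := hYle' t₀ le_rfl
    simp only [intervalIntegral.integral_same, add_zero] at hY0'
    have : E₁ = 1 := by
      simp [hE₁def]
    have hI : I₂ = 0 := by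
      simp [hI₂def]
    rw [this, hI, mul_one, mul_zero, add_zero, one_div,
      Real.rpow_rpow_inv hc'.le hβne]
    exact hY0'
  -- antitonicity of g
  have hanti : AntitoneOn g (Set.Icc t₀ T) := by
    apply antitoneOn_of_deriv_nonpos (convex_Icc _ _)
    · refine ContinuousOn.mono ?_ Set.Icc_subset_Ici_self
      exact ((hZcont.rpow_const fun x hx => Or.inl (hZpos x hx).ne').mul hEcont).sub
        ((hprim f₂ hf₂cont).const_smul β)
    · intro x hx
      rw [interior_Icc] at hx
      exact (hgd x hx.1).differentiableAt.differentiableWithinAt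
    · intro x hx
      rw [interior_Icc] at hx
      rw [(hgd x hx.1).deriv]
      exact hgd0 x hx.1
  have hgT : g T ≤ g t₀ := hanti ⟨le_rfl, hT⟩ ⟨hT, le_rfl⟩ hT
  have hg0 : g t₀ = c' ^ β := by
    simp [hgdef, hZdef, hAdef, hEdef, hBdef]
  -- unfold the inequality `g T ≤ c' ^ β`
  have hmain : Z T ^ β * E T ≤ c' ^ β + β * B T := by
    have : g T = Z T ^ β * E T - β * B T := rfl
    rw [this, hg0] at hgT
    linarith
  have hEE : E T * Real.exp (β * A T) = 1 := by
    have : E T = Real.exp (-(β * A T)) := rfl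
    rw [this, ← Real.exp_add]; simp
  have h6 : Z T ^ β ≤ (c' ^ β + β * B T) * Real.exp (β * A T) := by
    have h := mul_le_mul_of_nonneg_right hmain (Real.exp_pos (β * A T)).le
    calc Z T ^ β = Z T ^ β * (E T * Real.exp (β * A T)) := by rw [hEE, mul_one]
      _ = Z T ^ β * E T * Real.exp (β * A T) := by ring
      _ ≤ (c' ^ β + β * B T) * Real.exp (β * A T) := h
  -- rewrite the RHS
  have hident : Real.exp (β * A T) * B T = I₂ := by
    have : B T = ∫ s in t₀..T, f₂ s := rfl
    rw [this, ← intervalIntegral.integral_const_mul, hI₂def]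
    apply intervalIntegral.integral_congr
    intro s hs
    rw [Set.uIcc_of_le hT] at hs
    have hs0 : t₀ ≤ s := hs.1
    have hadd : A s + ∫ r in s..T, a r = A T :=
      intervalIntegral.integral_add_adjacent_intervals
        (hInt a ha t₀ s le_rfl hs0) (hInt a ha s T hs0 hT)
    have hsum : β * A T + -(β * A s) = β * ∫ r in s..T, a r := by
      rw [← hadd]; ring
    show Real.exp (β * A T) * f₂ s = b s * Real.exp (β * ∫ r in s..T, a r)
    have hf2 : f₂ s = b s * Real.exp (-(β * A s)) := rfl
    rw [hf2]
    calc Real.exp (β * A T) * (b s * Real.exp (-(β * A s)))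
        = b s * Real.exp (β * A T + -(β * A s)) := by rw [Real.exp_add]; ring
      _ = b s * Real.exp (β * ∫ r in s..T, a r) := by rw [hsum]
  have h7 : Z T ^ β ≤ c' ^ β * E₁ + β * I₂ := by
    have hE₁ : E₁ = Real.exp (β * A T) := rfl
    calc Z T ^ β ≤ (c' ^ β + β * B T) * Real.exp (β * A T) := h6
      _ = c' ^ β * Real.exp (β * A T) + β * (Real.exp (β * A T) * B T) := by ring
      _ = c' ^ β * E₁ + β * I₂ := by rw [hident, ← hE₁]
  -- conclude
  have h8 : (Z T ^ β) ^ (1 / β) ≤ (c' ^ β * E₁ + β * I₂) ^ (1 / β) :=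
    Real.rpow_le_rpow (Real.rpow_nonneg (hZpos T hT).le β) h7 (by positivity)
  have h9 : (Z T ^ β) ^ (1 / β) = Z T := by
    rw [one_div, Real.rpow_rpow_inv (hZpos T hT).le hβne]
  calc Y T ≤ Z T := hYZ T hT
    _ = (Z T ^ β) ^ (1 / β) := h9.symm
    _ ≤ (c' ^ β * E₁ + β * I₂) ^ (1 / β) := h8
end

section
/- (Gronwall inequality with logarithmic nonlinearity) Let X, a, M, c₁, c₂ : [0, ∞) → [0, ∞) with X continuous, M nondecreasing with M(0) > 1, and c₁, c₂ locally integrable. Assume that for every t ≥ 0, X(t) + a(t) ≤ M(t) + ∫₀^t c₁(s)·X(s) ds + ∫₀^t c₂(s)·X(s)·log X(s) ds, where all integrals appearing are finite and X(s) log X(s) is interpreted as 0 when X(s) = 0. Set C₂(t) := ∫₀^t c₂(s) ds. Then for every t ≥ 0: X(t) + a(t) ≤ M(t)^{exp(C₂(t))} · exp( exp(C₂(t)) · ∫₀^t c₁(s)·exp(−C₂(s)) ds ). -/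
open MeasureTheory intervalIntegral

private lemma mul_log_le_mul_log {x z : ℝ} (hx : 0 ≤ x) (hxz : x ≤ z) (hz : 1 ≤ z) :
    x * Real.log x ≤ z * Real.log z := by
  rcases le_or_gt x 1 with h | h
  · have h1 : x * Real.log x ≤ 0 :=
      mul_nonpos_iff.mpr (Or.inl ⟨hx, Real.log_nonpos hx h⟩)
    have h2 : 0 ≤ z * Real.log z := mul_nonneg (by linarith) (Real.log_nonneg hz)
    linarith
  · exact mul_le_mul hxz (Real.log_le_log (by linarith) hxz)
      (Real.log_nonneg h.le) (by linarith)

set_option maxHeartbeats 1000000 in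
/-- Gronwall inequality with logarithmic nonlinearity: if
`X(t) + a(t) ≤ M(t) + ∫₀ᵗ c₁ X + ∫₀ᵗ c₂ X log X` for all `t ≥ 0`, with `X` continuous,
`M` nondecreasing, `M(0) > 1`, `c₁, c₂` locally integrable, all functions nonnegative, then
`X(t) + a(t) ≤ M(t)^{exp(C₂(t))} exp(exp(C₂(t)) ∫₀ᵗ c₁(s) exp(−C₂(s)) ds)`,
where `C₂(t) = ∫₀ᵗ c₂`. -/
theorem log_gronwall
    (X a M c₁ c₂ : ℝ → ℝ)
    (hX : ContinuousOn X (Set.Ici (0 : ℝ)))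
    (hX0 : ∀ t, 0 ≤ t → 0 ≤ X t) (ha0 : ∀ t, 0 ≤ t → 0 ≤ a t)
    (hM0 : ∀ t, 0 ≤ t → 0 ≤ M t)
    (hc₁0 : ∀ t, 0 ≤ t → 0 ≤ c₁ t) (hc₂0 : ∀ t, 0 ≤ t → 0 ≤ c₂ t)
    (hM : MonotoneOn M (Set.Ici (0 : ℝ))) (hM1 : 1 < M 0)
    (hc₁ : LocallyIntegrableOn c₁ (Set.Ici (0 : ℝ)))
    (hc₂ : LocallyIntegrableOn c₂ (Set.Ici (0 : ℝ)))
    (hint₁ : ∀ t, 0 ≤ t → IntervalIntegrable (fun s => c₁ s * X s) volume 0 t)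
    (hint₂ : ∀ t, 0 ≤ t →
      IntervalIntegrable (fun s => c₂ s * X s * Real.log (X s)) volume 0 t)
    (hineq : ∀ t, 0 ≤ t →
      X t + a t ≤ M t + (∫ s in (0:ℝ)..t, c₁ s * X s)
        + ∫ s in (0:ℝ)..t, c₂ s * X s * Real.log (X s)) :
    ∀ t, 0 ≤ t →
      X t + a t ≤ M t ^ Real.exp (∫ s in (0:ℝ)..t, c₂ s)
        * Real.exp (Real.exp (∫ s in (0:ℝ)..t, c₂ s)
            * ∫ s in (0:ℝ)..t, c₁ s * Real.exp (-∫ r in (0:ℝ)..s, c₂ r)) := by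
  intro T hT
  have hMT : 1 < M T := lt_of_lt_of_le hM1 (hM (Set.mem_Ici.mpr le_rfl) hT hT)
  have hMTpos : (0:ℝ) < M T := by linarith
  have hL : 0 < Real.log (M T) := Real.log_pos hMT
  -- interval integrability of c₁, c₂ on subintervals of [0, T]
  have ii₁ : ∀ u v : ℝ, 0 ≤ u → u ≤ v → v ≤ T → IntervalIntegrable c₁ volume u v := by
    intro u v hu huv hvT
    rw [intervalIntegrable_iff_integrableOn_Icc_of_le huv]
    exact hc₁.integrableOn_compact_subset (fun x hx => hu.trans hx.1) isCompact_Icc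
  have ii₂ : ∀ u v : ℝ, 0 ≤ u → u ≤ v → v ≤ T → IntervalIntegrable c₂ volume u v := by
    intro u v hu huv hvT
    rw [intervalIntegrable_iff_integrableOn_Icc_of_le huv]
    exact hc₂.integrableOn_compact_subset (fun x hx => hu.trans hx.1) isCompact_Icc
  set g : ℝ → ℝ := fun s => c₁ s * X s + c₂ s * X s * Real.log (X s) with hg
  have iig : ∀ u v : ℝ, 0 ≤ u → u ≤ v → v ≤ T → IntervalIntegrable g volume u v := by
    intro u v hu huv hvT
    have hsub : Set.uIcc u v ⊆ Set.uIcc 0 T := by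
      rw [Set.uIcc_of_le huv, Set.uIcc_of_le hT]
      exact Set.Icc_subset_Icc hu hvT
    exact ((hint₁ T hT).mono_set hsub).add ((hint₂ T hT).mono_set hsub)
  -- splitting of primitives
  have hadd : ∀ (f : ℝ → ℝ),
      (∀ u v : ℝ, 0 ≤ u → u ≤ v → v ≤ T → IntervalIntegrable f volume u v) →
      ∀ u v : ℝ, 0 ≤ u → u ≤ v → v ≤ T →
      (∫ s in (0:ℝ)..v, f s) = (∫ s in (0:ℝ)..u, f s) + ∫ s in u..v, f s := by
    intro f hf u v hu huv hvT
    exact (intervalIntegral.integral_add_adjacent_intervals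
      (hf 0 u le_rfl hu (huv.trans hvT)) (hf u v hu huv hvT)).symm
  -- continuity of primitives
  have hprim : ∀ (f : ℝ → ℝ),
      (∀ u v : ℝ, 0 ≤ u → u ≤ v → v ≤ T → IntervalIntegrable f volume u v) →
      ContinuousOn (fun t => ∫ s in (0:ℝ)..t, f s) (Set.Icc 0 T) := by
    intro f hf
    have h1 : IntegrableOn f (Set.uIcc 0 T) := by
      rw [Set.uIcc_of_le hT]
      rw [← intervalIntegrable_iff_integrableOn_Icc_of_le hT]
      exact hf 0 T le_rfl hT le_rfl
    have h2 := intervalIntegral.continuousOn_primitive_interval h1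
    rwa [Set.uIcc_of_le hT] at h2
  -- key estimate for every ε > 0
  have key : ∀ ε : ℝ, 0 < ε → X T + a T ≤
      Real.exp (Real.exp ((1+ε) * (∫ s in (0:ℝ)..T, c₂ s)) *
        (Real.log (M T) + ε
          + (1+ε) * (∫ s in (0:ℝ)..T, c₁ s * Real.exp (-∫ r in (0:ℝ)..s, c₂ r)) + ε * T)) := by
    intro ε hε
    have hε1 : (0:ℝ) < 1 + ε := by linarith
    set C : ℝ → ℝ := fun t => ∫ s in (0:ℝ)..t, c₂ s with hC
    set D : ℝ → ℝ := fun t => (1+ε) * C t with hD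
    set hf : ℝ → ℝ := fun s => (1+ε) * c₁ s + ε with hhf
    set I : ℝ → ℝ := fun t => ∫ s in (0:ℝ)..t, hf s * Real.exp (-D s) with hI
    set K : ℝ := Real.log (M T) + ε with hK
    set B : ℝ → ℝ := fun t => Real.exp (D t) * (K + I t) with hB
    set Z : ℝ → ℝ := fun t => Real.exp (B t) with hZ
    set Y : ℝ → ℝ := fun t => M T + ∫ s in (0:ℝ)..t, g s with hY
    have hKpos : 0 < K := by rw [hK]; linarith
    have hCcont : ContinuousOn C (Set.Icc 0 T) := hprim c₂ ii₂
    have hDcont : ContinuousOn D (Set.Icc 0 T) := continuousOn_const.mul hCcont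
    have hEcont : ContinuousOn (fun s => Real.exp (-D s)) (Set.Icc 0 T) :=
      Real.continuous_exp.comp_continuousOn hDcont.neg
    have iihf : ∀ u v : ℝ, 0 ≤ u → u ≤ v → v ≤ T → IntervalIntegrable hf volume u v := by
      intro u v hu huv hvT
      exact ((ii₁ u v hu huv hvT).const_mul _).add intervalIntegrable_const
    have iihE : ∀ u v : ℝ, 0 ≤ u → u ≤ v → v ≤ T →
        IntervalIntegrable (fun s => hf s * Real.exp (-D s)) volume u v := by
      intro u v hu huv hvT
      refine (iihf u v hu huv hvT).mul_continuousOn (hEcont.mono ?_)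
      rw [Set.uIcc_of_le huv]
      exact Set.Icc_subset_Icc hu hvT
    have hIcont : ContinuousOn I (Set.Icc 0 T) := hprim _ iihE
    have hBcont : ContinuousOn B (Set.Icc 0 T) :=
      (Real.continuous_exp.comp_continuousOn hDcont).mul (continuousOn_const.add hIcont)
    have hZcont : ContinuousOn Z (Set.Icc 0 T) := Real.continuous_exp.comp_continuousOn hBcont
    have hYcont : ContinuousOn Y (Set.Icc 0 T) := continuousOn_const.add (hprim g iig)
    -- nonnegativity and monotonicity facts
    have hC0 : ∀ t ∈ Set.Icc (0:ℝ) T, 0 ≤ C t := by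
      intro t ht
      exact intervalIntegral.integral_nonneg ht.1 (fun s hs => hc₂0 s hs.1)
    have hhf0 : ∀ s, 0 ≤ s → 0 ≤ hf s := by
      intro s hs
      have := hc₁0 s hs
      rw [hhf]; positivity
    have hI0 : ∀ t ∈ Set.Icc (0:ℝ) T, 0 ≤ I t := by
      intro t ht
      refine intervalIntegral.integral_nonneg ht.1 (fun s hs => ?_)
      exact mul_nonneg (hhf0 s hs.1) (Real.exp_pos _).le
    have hBpos : ∀ t ∈ Set.Icc (0:ℝ) T, 0 < B t := by
      intro t ht
      exact mul_pos (Real.exp_pos _) (by have := hI0 t ht; linarith)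
    have hZ1 : ∀ t ∈ Set.Icc (0:ℝ) T, 1 ≤ Z t := by
      intro t ht
      exact Real.one_le_exp (hBpos t ht).le
    have hCmono : ∀ u v : ℝ, 0 ≤ u → u ≤ v → v ≤ T → C u ≤ C v := by
      intro u v hu huv hvT
      have h1 := hadd c₂ ii₂ u v hu huv hvT
      have h2 : 0 ≤ ∫ s in u..v, c₂ s :=
        intervalIntegral.integral_nonneg huv (fun s hs => hc₂0 s (hu.trans hs.1))
      rw [hC]; dsimp only; linarith
    have hDmono : ∀ u v : ℝ, 0 ≤ u → u ≤ v → v ≤ T → D u ≤ D v := by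
      intro u v hu huv hvT
      have h1 := hCmono u v hu huv hvT
      rw [hD]; dsimp only
      exact mul_le_mul_of_nonneg_left h1 hε1.le
    have hImono : ∀ u v : ℝ, 0 ≤ u → u ≤ v → v ≤ T → I u ≤ I v := by
      intro u v hu huv hvT
      have h1 := hadd _ iihE u v hu huv hvT
      have h2 : 0 ≤ ∫ s in u..v, hf s * Real.exp (-D s) :=
        intervalIntegral.integral_nonneg huv
          (fun s hs => mul_nonneg (hhf0 s (hu.trans hs.1)) (Real.exp_pos _).le)
      rw [hI]; dsimp only; linarith
    have hBmono : ∀ u v : ℝ, 0 ≤ u → u ≤ v → v ≤ T → B u ≤ B v := by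
      intro u v hu huv hvT
      have h1 := hDmono u v hu huv hvT
      have h2 := hImono u v hu huv hvT
      have h3 := hI0 u ⟨hu, huv.trans hvT⟩
      rw [hB]; dsimp only
      have h4 : Real.exp (D u) ≤ Real.exp (D v) := Real.exp_le_exp.mpr h1
      have h5 : (0:ℝ) ≤ K + I u := by linarith
      exact mul_le_mul h4 (by linarith) h5 (Real.exp_pos _).le
    have hZmono : ∀ u v : ℝ, 0 ≤ u → u ≤ v → v ≤ T → Z u ≤ Z v := by
      intro u v hu huv hvT
      exact Real.exp_le_exp.mpr (hBmono u v hu huv hvT)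
    -- key lower bound on increments of B
    have hBLB : ∀ u v : ℝ, 0 ≤ u → u ≤ v → v ≤ T →
        B u * (D v - D u) + ((1+ε) * (∫ s in u..v, c₁ s) + ε * (v - u)) ≤ B v - B u := by
      intro u v hu huv hvT
      have hIuv : I v - I u = ∫ s in u..v, hf s * Real.exp (-D s) := by
        have h0 := hadd _ iihE u v hu huv hvT
        rw [hI]; dsimp only; linarith
      have hDuv : D u ≤ D v := hDmono u v hu huv hvT
      have h1 : Real.exp (D u) * (D v - D u) ≤ Real.exp (D v) - Real.exp (D u) := by
        have h2 := Real.add_one_le_exp (D v - D u)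
        have h3 : Real.exp (D u) * ((D v - D u) + 1) ≤ Real.exp (D u) * Real.exp (D v - D u) :=
          mul_le_mul_of_nonneg_left h2 (Real.exp_pos _).le
        rw [← Real.exp_add] at h3
        have h4 : D u + (D v - D u) = D v := by ring
        rw [h4] at h3
        linarith
      have h2 : (∫ s in u..v, hf s) * Real.exp (-(D v)) ≤ I v - I u := by
        rw [hIuv]
        have h4 : (∫ s in u..v, hf s * Real.exp (-(D v))) ≤
            ∫ s in u..v, hf s * Real.exp (-D s) := by
          refine intervalIntegral.integral_mono_on huv
            ((iihf u v hu huv hvT).mul_const _) (iihE u v hu huv hvT) (fun s hs => ?_)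
          refine mul_le_mul_of_nonneg_left ?_ (hhf0 s (hu.trans hs.1))
          exact Real.exp_le_exp.mpr (neg_le_neg (hDmono s v (hu.trans hs.1) hs.2 hvT))
        rwa [intervalIntegral.integral_mul_const] at h4
      have h3 : ∫ s in u..v, hf s = (1+ε) * (∫ s in u..v, c₁ s) + ε * (v - u) := by
        rw [hhf]
        rw [intervalIntegral.integral_add ((ii₁ u v hu huv hvT).const_mul _)
          intervalIntegrable_const]
        rw [intervalIntegral.integral_const_mul, intervalIntegral.integral_const,
          smul_eq_mul]
        ring
      have hexp : B v - B u =
          (Real.exp (D v) - Real.exp (D u)) * (K + I u) + Real.exp (D v) * (I v - I u) := by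
        rw [hB]; dsimp only; ring
      have hKIu : (0:ℝ) ≤ K + I u := by
        have := hI0 u ⟨hu, huv.trans hvT⟩; linarith
      have h5 : Real.exp (D u) * (D v - D u) * (K + I u) ≤
          (Real.exp (D v) - Real.exp (D u)) * (K + I u) :=
        mul_le_mul_of_nonneg_right h1 hKIu
      have h6 : (∫ s in u..v, hf s) ≤ Real.exp (D v) * (I v - I u) := by
        have h7 := mul_le_mul_of_nonneg_left h2 (Real.exp_pos (D v)).le
        have h8 : Real.exp (D v) * ((∫ s in u..v, hf s) * Real.exp (-(D v)))
            = ∫ s in u..v, hf s := by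
          rw [show Real.exp (D v) * ((∫ s in u..v, hf s) * Real.exp (-(D v)))
            = (∫ s in u..v, hf s) * (Real.exp (D v) * Real.exp (-(D v))) from by ring]
          rw [← Real.exp_add]; simp
        rw [h8] at h7; exact h7
      have hBu : B u * (D v - D u) = Real.exp (D u) * (D v - D u) * (K + I u) := by
        rw [hB]; dsimp only; ring
      linarith [hexp, h5, h6, h3, hBu]
    have hZLB : ∀ u v : ℝ, 0 ≤ u → u ≤ v → v ≤ T →
        Z u * (B u * (D v - D u) + ((1+ε) * (∫ s in u..v, c₁ s) + ε * (v - u))) ≤ Z v - Z u := by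
      intro u v hu huv hvT
      have h1 : Real.exp (B u) * (B v - B u) ≤ Real.exp (B v) - Real.exp (B u) := by
        have h2 := Real.add_one_le_exp (B v - B u)
        have h3 : Real.exp (B u) * ((B v - B u) + 1) ≤ Real.exp (B u) * Real.exp (B v - B u) :=
          mul_le_mul_of_nonneg_left h2 (Real.exp_pos _).le
        rw [← Real.exp_add] at h3
        have h4 : B u + (B v - B u) = B v := by ring
        rw [h4] at h3
        linarith
      have h5 := mul_le_mul_of_nonneg_left (hBLB u v hu huv hvT) (Real.exp_pos (B u)).le
      rw [hZ]; dsimp only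
      linarith
    -- X ≤ Y on [0, T]
    have hXY : ∀ s ∈ Set.Icc (0:ℝ) T, X s ≤ Y s := by
      intro s hs
      have h1 := hineq s hs.1
      have h2 : (∫ r in (0:ℝ)..s, g r) = (∫ r in (0:ℝ)..s, c₁ r * X r)
          + ∫ r in (0:ℝ)..s, c₂ r * X r * Real.log (X r) := by
        rw [hg]
        exact intervalIntegral.integral_add (hint₁ s hs.1) (hint₂ s hs.1)
      have h3 : M s ≤ M T := hM hs.1 hT hs.2
      have h4 := ha0 s hs.1
      rw [hY]; dsimp only; linarith
    -- main claim: Y < Z on [0, T]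
    have hYZ : ∀ t ∈ Set.Icc (0:ℝ) T, Y t < Z t := by
      by_contra hcon
      push_neg at hcon
      obtain ⟨t₀, ht₀, hZY0⟩ := hcon
      have hYZcont : ContinuousOn (fun t => Y t - Z t) (Set.Icc 0 T) := hYcont.sub hZcont
      have hSclosed : IsClosed (Set.Icc 0 T ∩ (fun t => Y t - Z t) ⁻¹' (Set.Ici 0)) :=
        hYZcont.preimage_isClosed_of_isClosed isClosed_Icc isClosed_Ici
      have hSne : (Set.Icc 0 T ∩ (fun t => Y t - Z t) ⁻¹' (Set.Ici 0)).Nonempty :=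
        ⟨t₀, ht₀, by simp only [Set.mem_preimage, Set.mem_Ici]; linarith⟩
      have hSbdd : BddBelow (Set.Icc 0 T ∩ (fun t => Y t - Z t) ⁻¹' (Set.Ici 0)) :=
        ⟨0, fun x hx => hx.1.1⟩
      set τ := sInf (Set.Icc 0 T ∩ (fun t => Y t - Z t) ⁻¹' (Set.Ici 0)) with hτ
      have hτS : τ ∈ Set.Icc 0 T ∩ (fun t => Y t - Z t) ⁻¹' (Set.Ici 0) :=
        hSclosed.csInf_mem hSne hSbdd
      have hτI : τ ∈ Set.Icc (0:ℝ) T := hτS.1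
      have hZYτ : Z τ ≤ Y τ := by
        have := hτS.2
        simp only [Set.mem_preimage, Set.mem_Ici] at this
        linarith
      have hτT : τ ≤ T := hτI.2
      -- τ > 0
      have hY0 : Y 0 = M T := by rw [hY]; simp
      have hZ0 : Z 0 = M T * Real.exp ε := by
        rw [hZ, hB, hD, hI, hC, hK]; dsimp only
        simp [Real.exp_add, Real.exp_log hMTpos]
      have hτpos : 0 < τ := by
        rcases lt_or_eq_of_le hτI.1 with h | h
        · exact h
        · exfalso
          rw [← h] at hZYτ
          rw [hY0, hZ0] at hZYτ
          nlinarith [Real.add_one_le_exp ε, hMTpos, hε]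
      have hlt : ∀ s, 0 ≤ s → s < τ → Y s < Z s := by
        intro s hs hsτ
        by_contra hc
        push_neg at hc
        have hsS : s ∈ Set.Icc 0 T ∩ (fun t => Y t - Z t) ⁻¹' (Set.Ici 0) :=
          ⟨⟨hs, hsτ.le.trans hτT⟩, by simp only [Set.mem_preimage, Set.mem_Ici]; linarith⟩
        exact absurd (csInf_le hSbdd hsS) (not_le.mpr hsτ)
      -- choose u < τ close to τ
      have hZpos_τ : 0 < Z τ := Real.exp_pos _
      have hBpos_τ : 0 < B τ := hBpos τ hτI
      have hsub : Set.Ioo 0 τ ⊆ Set.Icc 0 T := fun x hx => ⟨hx.1.le, hx.2.le.trans hτT⟩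
      have hFle : nhdsWithin τ (Set.Ioo 0 τ) ≤ nhdsWithin τ (Set.Icc 0 T) :=
        nhdsWithin_mono τ hsub
      haveI : (nhdsWithin τ (Set.Ioo 0 τ)).NeBot := right_nhdsWithin_Ioo_neBot hτpos
      have hZw : Filter.Tendsto Z (nhdsWithin τ (Set.Ioo 0 τ)) (nhds (Z τ)) :=
        ((hZcont.continuousWithinAt hτI) : Filter.Tendsto Z _ _).mono_left hFle
      have hZBw : Filter.Tendsto (fun t => Z t * B t) (nhdsWithin τ (Set.Ioo 0 τ))
          (nhds (Z τ * B τ)) :=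
        (((hZcont.continuousWithinAt hτI).mul (hBcont.continuousWithinAt hτI)) :
          Filter.Tendsto _ _ _).mono_left hFle
      have ev1 : ∀ᶠ u in nhdsWithin τ (Set.Ioo 0 τ), Z τ < (1+ε) * Z u := by
        have hlim : Filter.Tendsto (fun u => (1+ε) * Z u) (nhdsWithin τ (Set.Ioo 0 τ))
            (nhds ((1+ε) * Z τ)) := Filter.Tendsto.const_mul _ hZw
        exact hlim.eventually_const_lt (by nlinarith [hZpos_τ, hε])
      have ev2 : ∀ᶠ u in nhdsWithin τ (Set.Ioo 0 τ), Z τ * B τ < (1+ε) * (Z u * B u) := by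
        have hlim : Filter.Tendsto (fun u => (1+ε) * (Z u * B u))
            (nhdsWithin τ (Set.Ioo 0 τ)) (nhds ((1+ε) * (Z τ * B τ))) :=
          Filter.Tendsto.const_mul _ hZBw
        exact hlim.eventually_const_lt (by nlinarith [mul_pos hZpos_τ hBpos_τ, hε])
      have ev3 : ∀ᶠ u in nhdsWithin τ (Set.Ioo 0 τ), u ∈ Set.Ioo 0 τ :=
        eventually_mem_nhdsWithin
      obtain ⟨u, hu1, hu2, hu3⟩ := (ev1.and (ev2.and ev3)).exists
      obtain ⟨hu0, huτ⟩ := hu3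
      have huT : u ≤ T := huτ.le.trans hτT
      have hP0 : 0 ≤ ∫ s in u..τ, c₁ s :=
        intervalIntegral.integral_nonneg huτ.le (fun s hs => hc₁0 s (hu0.le.trans hs.1))
      have hQ0 : 0 ≤ ∫ s in u..τ, c₂ s :=
        intervalIntegral.integral_nonneg huτ.le (fun s hs => hc₂0 s (hu0.le.trans hs.1))
      -- upper bound for Y τ
      have hYτu : Y τ = Y u + ∫ s in u..τ, g s := by
        have := hadd g iig u τ hu0.le huτ.le hτT
        rw [hY]; dsimp only; linarith
      have hae : ∀ᵐ s ∂(volume.restrict (Set.Icc u τ)),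
          g s ≤ c₁ s * Z τ + c₂ s * (Z τ * B τ) := by
        have hne : ∀ᵐ s ∂(volume.restrict (Set.Icc u τ)), s ≠ τ := by
          refine MeasureTheory.ae_iff.mpr ?_
          have hset : {s : ℝ | ¬ s ≠ τ} = {τ} := by ext x; simp
          rw [hset, Measure.restrict_apply (measurableSet_singleton τ)]
          exact measure_mono_null Set.inter_subset_left (measure_singleton τ)
        filter_upwards [hne, ae_restrict_mem measurableSet_Icc] with s hsne hsIcc
        have hs0 : 0 ≤ s := hu0.le.trans hsIcc.1
        have hsτ : s < τ := lt_of_le_of_ne hsIcc.2 hsne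
        have hsT : s ≤ T := hsτ.le.trans hτT
        have hXZs : X s ≤ Z τ :=
          ((hXY s ⟨hs0, hsT⟩).trans (hlt s hs0 hsτ).le).trans (hZmono s τ hs0 hsτ.le hτT)
        have hlogZτ : Real.log (Z τ) = B τ := by rw [hZ]; exact Real.log_exp _
        have t1 : c₁ s * X s ≤ c₁ s * Z τ := mul_le_mul_of_nonneg_left hXZs (hc₁0 s hs0)
        have t2 : X s * Real.log (X s) ≤ Z τ * B τ := by
          have := mul_log_le_mul_log (hX0 s hs0) hXZs (hZ1 τ hτI)
          rwa [hlogZτ] at this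
        have t3 : c₂ s * (X s * Real.log (X s)) ≤ c₂ s * (Z τ * B τ) :=
          mul_le_mul_of_nonneg_left t2 (hc₂0 s hs0)
        rw [hg]; dsimp only
        calc c₁ s * X s + c₂ s * X s * Real.log (X s)
            = c₁ s * X s + c₂ s * (X s * Real.log (X s)) := by ring
          _ ≤ c₁ s * Z τ + c₂ s * (Z τ * B τ) := add_le_add t1 t3
      have hgint : (∫ s in u..τ, g s) ≤
          (∫ s in u..τ, c₁ s) * Z τ + (∫ s in u..τ, c₂ s) * (Z τ * B τ) := by
        have hint : IntervalIntegrable (fun s => c₁ s * Z τ + c₂ s * (Z τ * B τ))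
            volume u τ :=
          ((ii₁ u τ hu0.le huτ.le hτT).mul_const _).add
            ((ii₂ u τ hu0.le huτ.le hτT).mul_const _)
        have h1 := intervalIntegral.integral_mono_ae_restrict huτ.le
          (iig u τ hu0.le huτ.le hτT) hint hae
        rwa [intervalIntegral.integral_add ((ii₁ u τ hu0.le huτ.le hτT).mul_const _)
          ((ii₂ u τ hu0.le huτ.le hτT).mul_const _),
          intervalIntegral.integral_mul_const, intervalIntegral.integral_mul_const] at h1
      have hupper : Z τ ≤ Y u + ((∫ s in u..τ, c₁ s) * Z τ
          + (∫ s in u..τ, c₂ s) * (Z τ * B τ)) := by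
        rw [hYτu] at hZYτ; linarith
      -- lower bound
      have hDQ : D τ - D u = (1+ε) * ∫ s in u..τ, c₂ s := by
        have h0 := hadd c₂ ii₂ u τ hu0.le huτ.le hτT
        rw [hD, hC]; dsimp only
        linear_combination (1+ε) * h0
      have hlower : Z u + Z u * (B u * ((1+ε) * ∫ s in u..τ, c₂ s)
          + ((1+ε) * (∫ s in u..τ, c₁ s) + ε * (τ - u))) ≤ Z τ := by
        have := hZLB u τ hu0.le huτ.le hτT
        rw [hDQ] at this; linarith
      have hYuZu : Y u < Z u := hlt u hu0.le huτ
      have hZupos : 0 < Z u := Real.exp_pos _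
      have h1 : (∫ s in u..τ, c₁ s) * Z τ ≤ (∫ s in u..τ, c₁ s) * ((1+ε) * Z u) :=
        mul_le_mul_of_nonneg_left hu1.le hP0
      have h2 : (∫ s in u..τ, c₂ s) * (Z τ * B τ) ≤
          (∫ s in u..τ, c₂ s) * ((1+ε) * (Z u * B u)) :=
        mul_le_mul_of_nonneg_left hu2.le hQ0
      have hpos : 0 < Z u * (ε * (τ - u)) :=
        mul_pos hZupos (mul_pos hε (sub_pos.mpr huτ))
      linarith [hupper, hlower, hYuZu, h1, h2, hpos]
    -- conclude the key estimate
    have hfinal1 : X T + a T ≤ Y T := by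
      have h1 := hineq T hT
      have h2 : (∫ r in (0:ℝ)..T, g r) = (∫ r in (0:ℝ)..T, c₁ r * X r)
          + ∫ r in (0:ℝ)..T, c₂ r * X r * Real.log (X r) := by
        rw [hg]
        exact intervalIntegral.integral_add (hint₁ T hT) (hint₂ T hT)
      rw [hY]; dsimp only; linarith
    have hfinal2 : Y T < Z T := hYZ T ⟨hT, le_rfl⟩
    have hDT : D T = (1+ε) * ∫ s in (0:ℝ)..T, c₂ s := by rw [hD, hC]
    have hECcont : ContinuousOn (fun s => Real.exp (-C s)) (Set.Icc 0 T) :=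
      Real.continuous_exp.comp_continuousOn hCcont.neg
    have hIT : I T ≤ (1+ε) * (∫ s in (0:ℝ)..T, c₁ s * Real.exp (-∫ r in (0:ℝ)..s, c₂ r))
        + ε * T := by
      have hrhs : IntervalIntegrable
          (fun s => (1+ε) * (c₁ s * Real.exp (-C s)) + ε) volume 0 T := by
        refine (((ii₁ 0 T le_rfl hT le_rfl).mul_continuousOn ?_).const_mul _).add
          intervalIntegrable_const
        rwa [Set.uIcc_of_le hT]
      have hpt : ∀ s ∈ Set.Icc (0:ℝ) T,
          hf s * Real.exp (-D s) ≤ (1+ε) * (c₁ s * Real.exp (-C s)) + ε := by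
        intro s hs
        have hCs := hC0 s hs
        have e1 : Real.exp (-D s) ≤ Real.exp (-C s) := by
          refine Real.exp_le_exp.mpr ?_
          rw [hD]; dsimp only; nlinarith
        have e2 : Real.exp (-D s) ≤ 1 := by
          rw [show (1:ℝ) = Real.exp 0 from (Real.exp_zero).symm]
          refine Real.exp_le_exp.mpr ?_
          rw [hD]; dsimp only; nlinarith
        have t1 : c₁ s * Real.exp (-D s) ≤ c₁ s * Real.exp (-C s) :=
          mul_le_mul_of_nonneg_left e1 (hc₁0 s hs.1)
        rw [hhf]; dsimp only
        have w1 := mul_le_mul_of_nonneg_left t1 hε1.le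
        have w2 := mul_le_mul_of_nonneg_left e2 hε.le
        nlinarith [w1, w2]
      have h1 := intervalIntegral.integral_mono_on hT (iihE 0 T le_rfl hT le_rfl) hrhs hpt
      rw [intervalIntegral.integral_add
        (((ii₁ 0 T le_rfl hT le_rfl).mul_continuousOn (by rwa [Set.uIcc_of_le hT])).const_mul _)
        intervalIntegrable_const, intervalIntegral.integral_const_mul,
        intervalIntegral.integral_const, smul_eq_mul] at h1
      rw [hI]; dsimp only
      have hJeq : (∫ s in (0:ℝ)..T, c₁ s * Real.exp (-C s))
          = ∫ s in (0:ℝ)..T, c₁ s * Real.exp (-∫ r in (0:ℝ)..s, c₂ r) := by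
        rw [hC]
      rw [hJeq] at h1
      linarith
    have hBT : B T ≤ Real.exp ((1+ε) * ∫ s in (0:ℝ)..T, c₂ s) *
        (Real.log (M T) + ε
          + (1+ε) * (∫ s in (0:ℝ)..T, c₁ s * Real.exp (-∫ r in (0:ℝ)..s, c₂ r)) + ε * T) := by
      rw [hB]; dsimp only; rw [hDT, hK]
      refine mul_le_mul_of_nonneg_left ?_ (Real.exp_pos _).le
      linarith [hIT]
    calc X T + a T ≤ Y T := hfinal1
      _ ≤ Z T := hfinal2.le
      _ = Real.exp (B T) := by rw [hZ]
      _ ≤ _ := Real.exp_le_exp.mpr hBT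
  -- pass to the limit ε → 0⁺
  set A : ℝ := ∫ s in (0:ℝ)..T, c₂ s with hA
  set J : ℝ := ∫ s in (0:ℝ)..T, c₁ s * Real.exp (-∫ r in (0:ℝ)..s, c₂ r) with hJ
  have hcont : ContinuousAt (fun ε : ℝ => Real.exp (Real.exp ((1+ε) * A) *
      (Real.log (M T) + ε + (1+ε) * J + ε * T))) 0 := by fun_prop
  have hlim : Filter.Tendsto (fun ε : ℝ => Real.exp (Real.exp ((1+ε) * A) *
      (Real.log (M T) + ε + (1+ε) * J + ε * T))) (nhdsWithin 0 (Set.Ioi 0))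
      (nhds (Real.exp (Real.exp ((1+0) * A) *
        (Real.log (M T) + 0 + (1+0) * J + 0 * T)))) :=
    hcont.tendsto.mono_left nhdsWithin_le_nhds
  have hev : ∀ᶠ ε in nhdsWithin (0:ℝ) (Set.Ioi 0), X T + a T ≤
      Real.exp (Real.exp ((1+ε) * A) * (Real.log (M T) + ε + (1+ε) * J + ε * T)) := by
    filter_upwards [eventually_mem_nhdsWithin] with ε hε
    exact key ε hε
  have hfin := ge_of_tendsto hlim hev
  have heq : Real.exp (Real.exp ((1+0) * A) * (Real.log (M T) + 0 + (1+0) * J + 0 * T))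
      = M T ^ Real.exp A * Real.exp (Real.exp A * J) := by
    rw [Real.rpow_def_of_pos hMTpos, ← Real.exp_add]
    norm_num
    ring_nf
  rw [heq] at hfin
  exact hfin
end

section
/- Define ρ : [0, ∞) → [0, ∞) by ρ(x) = x/e for 0 ≤ x < e and ρ(x) = log x for x ≥ e, and define Φ : [0, ∞) → [0, ∞) by Φ(z) = exp( ∫₀^z dx/(1 + x + x·ρ(x)) ). Then Φ is differentiable on [0, ∞) with derivative Φ'(z) = Φ(z)/(1 + z + z·ρ(z)) for all z ≥ 0, and Φ' is nonincreasing on [0, ∞) (i.e. Φ is concave). -/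
open MeasureTheory

/-- `ρ(x) = x/e` for `0 ≤ x < e`, `ρ(x) = log x` for `x ≥ e`. -/
noncomputable def rho (x : ℝ) : ℝ :=
  if x < Real.exp 1 then x / Real.exp 1 else Real.log x

/-- `Φ(z) = exp(∫₀ᶻ dx / (1 + x + x ρ(x)))`. -/
noncomputable def Phi (z : ℝ) : ℝ :=
  Real.exp (∫ x in (0:ℝ)..z, 1 / (1 + x + x * rho x))

namespace PhiAux

open Set Real

noncomputable def D (x : ℝ) : ℝ := 1 + x + x * rho x

noncomputable def D' (z : ℝ) : ℝ :=
  if z < Real.exp 1 then 1 + 2 * z / Real.exp 1 else 2 + Real.log z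

lemma rho_eq_left {x : ℝ} (h : x ≤ Real.exp 1) : rho x = x / Real.exp 1 := by
  rcases lt_or_eq_of_le h with h | h
  · simp [rho, h]
  · subst h
    simp [rho, Real.log_exp, div_self (Real.exp_ne_zero 1)]

lemma rho_eq_right {x : ℝ} (h : Real.exp 1 ≤ x) : rho x = Real.log x := by
  simp [rho, not_lt.2 h]

lemma D_pos (x : ℝ) : 0 < D x := by
  by_cases h : x < Real.exp 1
  · have h1 : 0 < Real.exp 1 + Real.exp 1 * x + x ^ 2 := by
      nlinarith [sq_nonneg (2 * x + Real.exp 1), Real.exp_one_lt_d9, Real.exp_one_gt_d9]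
    have hD : D x = (Real.exp 1 + Real.exp 1 * x + x ^ 2) / Real.exp 1 := by
      unfold D
      rw [rho_eq_left h.le]
      field_simp
    rw [hD]
    positivity
  · push_neg at h
    have hx : 0 < x := lt_of_lt_of_le (Real.exp_pos 1) h
    have hlog : 1 ≤ Real.log x := (Real.le_log_iff_exp_le hx).2 (by simpa using h)
    have : D x = 1 + x + x * Real.log x := by unfold D; rw [rho_eq_right h]
    rw [this]
    nlinarith

lemma rho_cont : Continuous rho := by
  rw [continuous_iff_continuousAt]
  intro x
  rcases lt_trichotomy x (Real.exp 1) with h | h | h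
  · have heq : rho =ᶠ[nhds x] fun y => y / Real.exp 1 := by
      filter_upwards [Iio_mem_nhds h] with y hy
      exact rho_eq_left (le_of_lt hy)
    exact ((continuous_id.div_const _).continuousAt).congr heq.symm
  · subst h
    rw [← continuousWithinAt_univ, ← Iic_union_Ici (a := Real.exp 1)]
    apply ContinuousWithinAt.union
    · exact ((continuous_id.div_const _).continuousWithinAt).congr
        (fun y hy => rho_eq_left hy) (rho_eq_left le_rfl)
    · exact ((Real.continuousAt_log (Real.exp_pos 1).ne').continuousWithinAt).congr
        (fun y hy => rho_eq_right hy) (rho_eq_right le_rfl)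
  · have heq : rho =ᶠ[nhds x] Real.log := by
      filter_upwards [Ioi_mem_nhds h] with y hy
      exact rho_eq_right (le_of_lt hy)
    exact (Real.continuousAt_log (lt_trans (Real.exp_pos 1) h).ne').congr heq.symm

lemma D_cont : Continuous D :=
  ((continuous_const.add continuous_id).add (continuous_id.mul rho_cont))

lemma f_cont : Continuous fun x => 1 / D x :=
  continuous_const.div D_cont fun x => (D_pos x).ne'

lemma hasDerivAt_Phi (z : ℝ) : HasDerivAt Phi (Phi z * (1 / D z)) z := by
  have hI : HasDerivAt (fun z => ∫ x in (0:ℝ)..z, 1 / D x) (1 / D z) z :=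
    intervalIntegral.integral_hasDerivAt_right (f_cont.intervalIntegrable _ _)
      (f_cont.stronglyMeasurableAtFilter _ _) f_cont.continuousAt
  exact (Real.hasDerivAt_exp _).comp z hI

lemma hasDerivAt_D (z : ℝ) : HasDerivAt D (D' z) z := by
  rcases lt_trichotomy z (Real.exp 1) with h | h | h
  · have hg : HasDerivAt (fun y : ℝ => 1 + y + y * (y / Real.exp 1))
        (1 + 2 * z / Real.exp 1) z := by
      have h1 : HasDerivAt (fun y : ℝ => 1 + y + y * (y / Real.exp 1))
          (0 + 1 + (1 * (z / Real.exp 1) + z * (1 / Real.exp 1))) z := by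
        exact ((hasDerivAt_const z (1:ℝ)).add (hasDerivAt_id z)).add
          ((hasDerivAt_id z).mul ((hasDerivAt_id z).div_const _))
      convert h1 using 1
      field_simp
      ring
    have heq : D =ᶠ[nhds z] fun y => 1 + y + y * (y / Real.exp 1) := by
      filter_upwards [Iio_mem_nhds h] with y hy
      unfold D; rw [rho_eq_left hy.le]
    rw [D', if_pos h]
    exact hg.congr_of_eventuallyEq heq
  · subst h
    have hval : D' (Real.exp 1) = 3 := by
      rw [D', if_neg (lt_irrefl _), Real.log_exp]; norm_num
    rw [hval, ← hasDerivWithinAt_univ, ← Iic_union_Ici (a := Real.exp 1)]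
    apply HasDerivWithinAt.union
    · have hg : HasDerivAt (fun y : ℝ => 1 + y + y * (y / Real.exp 1)) 3 (Real.exp 1) := by
        have h1 : HasDerivAt (fun y : ℝ => 1 + y + y * (y / Real.exp 1))
            (0 + 1 + (1 * (Real.exp 1 / Real.exp 1) +
              Real.exp 1 * (1 / Real.exp 1))) (Real.exp 1) := by
          exact ((hasDerivAt_const _ (1:ℝ)).add (hasDerivAt_id _)).add
            ((hasDerivAt_id _).mul ((hasDerivAt_id _).div_const _))
        convert h1 using 1
        field_simp
        ring
      exact (hg.hasDerivWithinAt).congr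
        (fun y hy => by unfold D; rw [rho_eq_left hy])
        (by unfold D; rw [rho_eq_left le_rfl])
    · have hg : HasDerivAt (fun y : ℝ => 1 + y + y * Real.log y) 3 (Real.exp 1) := by
        have h1 : HasDerivAt (fun y : ℝ => 1 + y + y * Real.log y)
            (0 + 1 + (1 * Real.log (Real.exp 1) + Real.exp 1 * (Real.exp 1)⁻¹))
            (Real.exp 1) := by
          exact ((hasDerivAt_const _ (1:ℝ)).add (hasDerivAt_id _)).add
            ((hasDerivAt_id _).mul (Real.hasDerivAt_log (Real.exp_pos 1).ne'))
        convert h1 using 1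
        rw [Real.log_exp]
        norm_num
      exact (hg.hasDerivWithinAt).congr
        (fun y hy => by unfold D; rw [rho_eq_right hy])
        (by unfold D; rw [rho_eq_right le_rfl])
  · have hz : 0 < z := lt_trans (Real.exp_pos 1) h
    have hg : HasDerivAt (fun y : ℝ => 1 + y + y * Real.log y) (2 + Real.log z) z := by
      have h1 : HasDerivAt (fun y : ℝ => 1 + y + y * Real.log y)
          (0 + 1 + (1 * Real.log z + z * z⁻¹)) z := by
        exact ((hasDerivAt_const _ (1:ℝ)).add (hasDerivAt_id _)).add
          ((hasDerivAt_id _).mul (Real.hasDerivAt_log hz.ne'))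
      convert h1 using 1
      field_simp
      ring
    have heq : D =ᶠ[nhds z] fun y => 1 + y + y * Real.log y := by
      filter_upwards [Ioi_mem_nhds h] with y hy
      unfold D; rw [rho_eq_right hy.le]
    rw [D', if_neg (not_lt.2 h.le)]
    exact hg.congr_of_eventuallyEq heq

lemma D'_ge_one {z : ℝ} (hz : 0 ≤ z) : 1 ≤ D' z := by
  rw [D']
  split_ifs with h
  · have : 0 ≤ 2 * z / Real.exp 1 := by positivity
    linarith
  · push_neg at h
    have hx : 0 < z := lt_of_lt_of_le (Real.exp_pos 1) h
    have : 1 ≤ Real.log z := (Real.le_log_iff_exp_le hx).2 (by simpa using h)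
    linarith

lemma hasDerivAt_g (z : ℝ) :
    HasDerivAt (fun z => Phi z / D z) (Phi z * (1 - D' z) / (D z) ^ 2) z := by
  have h := (hasDerivAt_Phi z).div (hasDerivAt_D z) (D_pos z).ne'
  refine h.congr_deriv ?_
  have hD := (D_pos z).ne'
  rw [mul_one_div, div_mul_cancel₀ _ hD]
  ring

lemma Phi_pos {z : ℝ} : 0 < Phi z := Real.exp_pos _

end PhiAux

/-- `Φ` is differentiable on `[0, ∞)` with `Φ'(z) = Φ(z)/(1 + z + z ρ(z))`,
and `Φ'` is nonincreasing on `[0, ∞)` (so `Φ` is concave). -/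
theorem Phi_deriv_and_concave :
    (∀ z ∈ Set.Ici (0 : ℝ),
      HasDerivWithinAt Phi (Phi z / (1 + z + z * rho z)) (Set.Ici (0 : ℝ)) z) ∧
    AntitoneOn (fun z => Phi z / (1 + z + z * rho z)) (Set.Ici (0 : ℝ)) := by
  open PhiAux in
  constructor
  · intro z _
    have h := (PhiAux.hasDerivAt_Phi z).hasDerivWithinAt (s := Set.Ici (0:ℝ))
    rw [mul_one_div] at h
    exact h
  · show AntitoneOn (fun z => Phi z / PhiAux.D z) (Set.Ici (0 : ℝ))
    apply antitoneOn_of_deriv_nonpos (convex_Ici 0)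
    · have hdiff : Differentiable ℝ Phi := fun z => (PhiAux.hasDerivAt_Phi z).differentiableAt
      have hPhi : Continuous Phi := hdiff.continuous
      exact (hPhi.div PhiAux.D_cont fun x => (PhiAux.D_pos x).ne').continuousOn
    · rw [interior_Ici]
      exact fun x _ => (PhiAux.hasDerivAt_g x).differentiableAt.differentiableWithinAt
    · rw [interior_Ici]
      intro x hx
      rw [(PhiAux.hasDerivAt_g x).deriv]
      apply div_nonpos_of_nonpos_of_nonneg
      · exact mul_nonpos_of_nonneg_of_nonpos PhiAux.Phi_pos.le
          (by linarith [PhiAux.D'_ge_one (le_of_lt hx)])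
      · positivity
end
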